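/- The estimates Ω_k(S) = (λ_min[(L^k)_{S^c}])^{1/k} are nondecreasing in k when k ranges over powers of 2; in particular Ω_1(S) ≤ Ω_2(S). -/

import Mathlib

open Matrix

section Aux
variable {N : ℕ} {S : Finset (Fin N)}

lemma sum_extend_aux (f : Fin N → ℝ) (hf : ∀ j ∈ S, f j = 0) :
    ∑ j : Fin N, f j = ∑ i : {x // x ∉ S}, f i := by
  classical
  have h := Finset.sum_subtype (p := fun x : Fin N => x ∉ S) (F := inferInstance)
    (Finset.univ.filter (fun j : Fin N => j ∉ S)) (fun x => by simp) f
  rw [← h, ← Finset.sum_subset (Finset.filter_subset (fun j : Fin N => j ∉ S) Finset.univ)]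
  intro x _ hx
  simp only [Finset.mem_filter, Finset.mem_univ, true_and, not_not] at hx
  exact hf x hx

noncomputable def ext0 (v : {x // x ∉ S} → ℝ) : Fin N → ℝ :=
  fun j => if h : j ∉ S then v ⟨j, h⟩ else 0

lemma ext0_mem (v : {x // x ∉ S} → ℝ) {j : Fin N} (hj : j ∈ S) : ext0 v j = 0 := by
  simp [ext0, hj]

lemma ext0_apply (v : {x // x ∉ S} → ℝ) (i : {x // x ∉ S}) : ext0 v (i : Fin N) = v i := by
  simp [ext0, i.2]

lemma dot_ext (v : {x // x ∉ S} → ℝ) : ext0 v ⬝ᵥ ext0 v = v ⬝ᵥ v := by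
  unfold dotProduct
  rw [sum_extend_aux _ (fun j hj => by rw [ext0_mem v hj]; ring)]
  simp [ext0_apply]

lemma quadform_ext (M : Matrix (Fin N) (Fin N) ℝ) (v : {x // x ∉ S} → ℝ) :
    ext0 v ⬝ᵥ (M *ᵥ ext0 v)
      = v ⬝ᵥ ((M.submatrix (fun i : {x // x ∉ S} => (i : Fin N))
        (fun i : {x // x ∉ S} => (i : Fin N))) *ᵥ v) := by
  simp only [mulVec, dotProduct, submatrix_apply]
  rw [sum_extend_aux _ (fun j hj => by rw [ext0_mem v hj]; ring)]
  refine Finset.sum_congr rfl fun i _ => ?_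
  rw [ext0_apply]
  congr 1
  rw [sum_extend_aux _ (fun j hj => by rw [ext0_mem v hj]; ring)]
  exact Finset.sum_congr rfl fun i' _ => by rw [ext0_apply]

lemma dp_self_pos {n : Type*} [Fintype n] {v : n → ℝ} (hv : v ≠ 0) : 0 < v ⬝ᵥ v := by
  refine lt_of_le_of_ne (Finset.sum_nonneg fun i _ => mul_self_nonneg _) ?_
  exact fun h => hv (dotProduct_self_eq_zero.mp h.symm)

end Aux

theorem cutoff_estimate_doubling_mono {N : ℕ}
    (L : Matrix (Fin N) (Fin N) ℝ) (hL : L.PosSemidef)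
    (S : Finset (Fin N)) (k : ℕ) (hk : 1 ≤ k) (l1 l2 : ℝ)
    (h1 : IsLeast {μ : ℝ | ∃ v : {x // x ∉ S} → ℝ, v ≠ 0 ∧
      ((L ^ k).submatrix (fun i : {x // x ∉ S} => (i : Fin N))
        (fun i : {x // x ∉ S} => (i : Fin N))) *ᵥ v = μ • v} l1)
    (h2 : IsLeast {μ : ℝ | ∃ v : {x // x ∉ S} → ℝ, v ≠ 0 ∧
      ((L ^ (2 * k)).submatrix (fun i : {x // x ∉ S} => (i : Fin N))
        (fun i : {x // x ∉ S} => (i : Fin N))) *ᵥ v = μ • v} l2) :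
    l1 ^ ((1 : ℝ) / k) ≤ l2 ^ ((1 : ℝ) / (2 * k)) := by
  classical
  set A := (L ^ k).submatrix (fun i : {x // x ∉ S} => (i : Fin N))
      (fun i : {x // x ∉ S} => (i : Fin N)) with hA_def
  set B := (L ^ (2 * k)).submatrix (fun i : {x // x ∉ S} => (i : Fin N))
      (fun i : {x // x ∉ S} => (i : Fin N)) with hB_def
  have hAps : A.PosSemidef := (hL.pow k).submatrix _
  have hsymk : (L ^ k)ᵀ = L ^ k := (hL.pow k).1
  -- l1 is nonnegative
  obtain ⟨v1, hv1, hev1⟩ := h1.1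
  have hn1 : 0 < v1 ⬝ᵥ v1 := dp_self_pos hv1
  have hl1 : 0 ≤ l1 := by
    have h := hAps.dotProduct_mulVec_nonneg v1
    rw [star_trivial, hev1, dotProduct_smul, smul_eq_mul] at h
    nlinarith
  -- Rayleigh quotient lower bound for A
  set M := A - l1 • 1 with hM_def
  have hone : ((l1 • (1 : Matrix {x // x ∉ S} {x // x ∉ S} ℝ))).IsHermitian := by
    rw [Matrix.IsHermitian, conjTranspose_smul, conjTranspose_one, star_trivial]
  have hMH : M.IsHermitian := hAps.1.sub hone
  have heig : ∀ i, 0 ≤ hMH.eigenvalues i := by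
    intro i
    have hw := hMH.mulVec_eigenvectorBasis i
    have hwne : ⇑(hMH.eigenvectorBasis i) ≠ 0 := by
      have h0 := hMH.eigenvectorBasis.orthonormal.ne_zero i
      exact fun h => h0 (by ext j; exact congrFun h j)
    have hmem : hMH.eigenvalues i + l1 ∈ {μ : ℝ | ∃ v : {x // x ∉ S} → ℝ, v ≠ 0 ∧
        A *ᵥ v = μ • v} := by
      refine ⟨_, hwne, ?_⟩
      have hAM : A = M + l1 • 1 := by rw [hM_def]; abel
      rw [hAM, add_mulVec, hw, smul_mulVec, one_mulVec, add_smul]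
    have := h1.2 hmem
    linarith
  have hMps : M.PosSemidef := hMH.posSemidef_iff_eigenvalues_nonneg.mpr heig
  have hRay : ∀ v : {x // x ∉ S} → ℝ, l1 * (v ⬝ᵥ v) ≤ v ⬝ᵥ (A *ᵥ v) := by
    intro v
    have h := hMps.dotProduct_mulVec_nonneg v
    rw [star_trivial, hM_def, sub_mulVec, dotProduct_sub, smul_mulVec, one_mulVec,
      dotProduct_smul, smul_eq_mul] at h
    linarith
  -- the key inequality l1^2 ≤ l2
  obtain ⟨v2, hv2, hev2⟩ := h2.1
  have hn2 : 0 < v2 ⬝ᵥ v2 := dp_self_pos hv2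
  have hgg : ext0 v2 ⬝ᵥ ext0 v2 = v2 ⬝ᵥ v2 := dot_ext v2
  have hqB : ext0 v2 ⬝ᵥ (L ^ (2 * k) *ᵥ ext0 v2) = l2 * (v2 ⬝ᵥ v2) := by
    rw [quadform_ext, ← hB_def, hev2, dotProduct_smul, smul_eq_mul]
  have hqA : ext0 v2 ⬝ᵥ (L ^ k *ᵥ ext0 v2) = v2 ⬝ᵥ (A *ᵥ v2) := by
    rw [quadform_ext, ← hA_def]
  have hw2 : (L ^ k *ᵥ ext0 v2) ⬝ᵥ (L ^ k *ᵥ ext0 v2)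
      = ext0 v2 ⬝ᵥ (L ^ (2 * k) *ᵥ ext0 v2) := by
    rw [two_mul, Matrix.dotProduct_mulVec, ← Matrix.mulVec_transpose, hsymk, mulVec_mulVec,
      ← pow_add, dotProduct_comm]
  have hCS : (ext0 v2 ⬝ᵥ (L ^ k *ᵥ ext0 v2)) ^ 2
      ≤ (ext0 v2 ⬝ᵥ ext0 v2) * ((L ^ k *ᵥ ext0 v2) ⬝ᵥ (L ^ k *ᵥ ext0 v2)) := by
    have h := Finset.sum_mul_sq_le_sq_mul_sq Finset.univ (ext0 v2) (L ^ k *ᵥ ext0 v2)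
    simpa [dotProduct, pow_two] using h
  rw [hw2, hgg, hqB, hqA] at hCS
  have hRay2 := hRay v2
  have hsq : l1 ^ 2 ≤ l2 := by
    have h5 : (l1 * (v2 ⬝ᵥ v2)) ^ 2 ≤ (v2 ⬝ᵥ (A *ᵥ v2)) ^ 2 :=
      pow_le_pow_left₀ (mul_nonneg hl1 hn2.le) hRay2 2
    nlinarith [mul_pos hn2 hn2]
  -- conclude via rpow monotonicity
  have hl2 : 0 ≤ l2 := le_trans (sq_nonneg l1) hsq
  have hkr : (0 : ℝ) < (k : ℝ) := by exact_mod_cast hk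
  have hkne : (k : ℝ) ≠ 0 := ne_of_gt hkr
  have hkey : l1 ^ ((1 : ℝ) / k) = (l1 ^ 2) ^ ((1 : ℝ) / (2 * k)) := by
    rw [show (1 : ℝ) / k = 2 * ((1 : ℝ) / (2 * k)) by field_simp,
      Real.rpow_mul hl1, show ((2 : ℝ)) = ((2 : ℕ) : ℝ) by norm_num,
      Real.rpow_natCast]
  rw [hkey]
  exact Real.rpow_le_rpow (sq_nonneg l1) hsq (by positivity)
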